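/- (Proposition, part (i)) Assume p_M > 0 for all M ∈ D_I. If b ∈ A(ι(I)) satisfies B_φ(a, b) = φ(ab) = 0 for all a ∈ A(I), then b = 0. -/

import Mathlib

noncomputable section
open scoped InnerProductSpace ComplexConjugate
open ContinuousLinearMap

namespace Fermion

variable (L : Type) [Fintype L] [LinearOrder L]

/-- The fermionic Fock space over the one-particle space `h = ℓ²(L)`, realized concretely
via its orthonormal basis indexed by the finite subsets of `L` (the vectors `f_M`). -/
abbrev FockSpace := EuclideanSpace ℂ (Finset L)

variable {L}

/-- The vacuum vector `Ψ = f_∅`. -/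
def vac : FockSpace L := EuclideanSpace.single ∅ 1

/-- Jordan–Wigner sign factor. -/
def jwSign (l : L) (S : Finset L) : ℂ := (-1 : ℂ) ^ (S.filter (fun k => k < l)).card

/-- The creation operator `a*_l = a*(e_l)`. -/
def cre (l : L) : FockSpace L →L[ℂ] FockSpace L :=
  LinearMap.toContinuousLinearMap <|
    (EuclideanSpace.basisFun (Finset L) ℂ).toBasis.constr ℂ fun S =>
      if l ∈ S then 0 else jwSign l S • EuclideanSpace.single (insert l S) 1

/-- The annihilation operator `a_l = a(e_l)`. -/
def ann (l : L) : FockSpace L →L[ℂ] FockSpace L := ContinuousLinearMap.adjoint (cre l)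

/-- The vector `f_{(l_1,…,l_n)} = a*_{l_1} ⋯ a*_{l_n} Ψ  (= P (e_{l_1} ⊗ ⋯ ⊗ e_{l_n}))`. -/
def fvec (M : List L) : FockSpace L := M.foldr (fun l v => cre l v) vac

/-- The algebra `A(I)` : the unital *-subalgebra of `B(H)` generated by `{a_l : l ∈ I}`. -/
def A (I : Finset L) : StarSubalgebra ℂ (FockSpace L →L[ℂ] FockSpace L) :=
  StarAlgebra.adjoin ℂ (ann '' (I : Set L))

/-- The trace on `B(H)`. -/
def Tr (T : FockSpace L →L[ℂ] FockSpace L) : ℂ := LinearMap.trace ℂ (FockSpace L) T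

/-- The rank-one operator `|x⟩⟨y|`. -/
def ketbra (x y : FockSpace L) : FockSpace L →L[ℂ] FockSpace L :=
  (ContinuousLinearMap.toSpanSingleton ℂ x).comp (innerSL ℂ y)

/-- A valid choice of `D_I`: `D S` enumerates the finite set `S` without repetitions. -/
def IsEnum (D : Finset L → List L) : Prop := ∀ S : Finset L, (D S).Nodup ∧ (D S).toFinset = S

/-- The entangled vector `Φ = Σ_{M ∈ D_I} p_M^{1/2} f_{M ι(M)}`. -/
def Phi (D : Finset L → List L) (p : Finset L → ℝ) (I : Finset L) (ι : L → L) : FockSpace L :=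
  ∑ S ∈ I.powerset, (Real.sqrt (p S) : ℂ) • fvec (D S ++ (D S).map ι)

/-- The state `φ(x) = ⟨Φ, xΦ⟩`. -/
def phi (D : Finset L → List L) (p : Finset L → ℝ) (I : Finset L) (ι : L → L)
    (x : FockSpace L →L[ℂ] FockSpace L) : ℂ :=
  ⟪Phi D p I ι, x (Phi D p I ι)⟫_ℂ

-- ### basic lemmas

def eb (X : Finset L) : FockSpace L := EuclideanSpace.single X 1

lemma eb_apply (X Y : Finset L) : eb X Y = if Y = X then 1 else 0 :=
  EuclideanSpace.single_apply X 1 Y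

lemma inner_eb_left (X : Finset L) (v : FockSpace L) : ⟪eb X, v⟫_ℂ = v X := by
  simpa [eb] using EuclideanSpace.inner_single_left X (1:ℂ) v

lemma inner_eb_eb (X Y : Finset L) : ⟪eb X, eb Y⟫_ℂ = if X = Y then 1 else 0 := by
  rw [inner_eb_left, eb_apply]

lemma euclid_sum (v : FockSpace L) : v = ∑ X : Finset L, v X • eb X := by
  ext Y
  rw [show (∑ X : Finset L, v X • eb X) Y = ⟪eb Y, ∑ X : Finset L, v X • eb X⟫_ℂ from
    (inner_eb_left _ _).symm, inner_sum]
  simp only [inner_smul_right, inner_eb_eb, mul_ite, mul_one, mul_zero, Finset.sum_ite_eq,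
    Finset.mem_univ, if_true]

lemma jwSign_mul_self (l : L) (S : Finset L) : jwSign l S * jwSign l S = 1 := by
  rw [jwSign, ← mul_pow, neg_mul_neg, one_mul, one_pow]

lemma jwSign_ne_zero (l : L) (S : Finset L) : jwSign l S ≠ 0 := by
  intro h
  have := jwSign_mul_self l S
  rw [h, mul_zero] at this
  exact one_ne_zero this.symm

lemma jwSign_conj (l : L) (S : Finset L) : conj (jwSign l S) = jwSign l S := by
  rw [jwSign, map_pow, map_neg, map_one]

lemma jwSign_union (l : L) {S T : Finset L} (h : Disjoint S T) :
    jwSign l (S ∪ T) = jwSign l S * jwSign l T := by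
  rw [jwSign, jwSign, jwSign, Finset.filter_union, Finset.card_union_of_disjoint
    (Finset.disjoint_filter_filter h), pow_add]

lemma cre_eb (l : L) (X : Finset L) :
    cre l (eb X) = if l ∈ X then 0 else jwSign l X • eb (insert l X) := by
  have hX : eb X = (EuclideanSpace.basisFun (Finset L) ℂ).toBasis X := by
    simp [eb, OrthonormalBasis.coe_toBasis, EuclideanSpace.basisFun_apply]
  rw [cre, LinearMap.coe_toContinuousLinearMap', hX, Module.Basis.constr_basis]
  rfl

lemma ann_eb (l : L) (X : Finset L) :
    ann l (eb X) = if l ∈ X then jwSign l (X.erase l) • eb (X.erase l) else 0 := by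
  ext Y
  have h1 : (ann l (eb X)) Y = ⟪cre l (eb Y), eb X⟫_ℂ := by
    rw [show (ann l (eb X)) Y = ⟪eb Y, ann l (eb X)⟫_ℂ from (inner_eb_left _ _).symm, ann,
      ContinuousLinearMap.adjoint_inner_right]
  rw [h1, cre_eb]
  by_cases hlY : l ∈ Y
  · rw [if_pos hlY, inner_zero_left]
    by_cases hlX : l ∈ X
    · rw [if_pos hlX]
      have : Y ≠ X.erase l := fun hc => (Finset.notMem_erase l X) (hc ▸ hlY)
      simp [eb_apply, this]
    · simp [hlX]
  · rw [if_neg hlY, inner_smul_left, jwSign_conj, inner_eb_eb]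
    by_cases hlX : l ∈ X
    · rw [if_pos hlX]
      by_cases hY : Y = X.erase l
      · have hins : insert l Y = X := by rw [hY, Finset.insert_erase hlX]
        rw [if_pos hins, hY]
        simp [eb_apply]
      · have hins : insert l Y ≠ X := by
          intro hc
          exact hY (by rw [← hc, Finset.erase_insert hlY])
        rw [if_neg hins]
        simp [eb_apply, hY]
    · have hins : insert l Y ≠ X := fun hc => hlX (hc ▸ Finset.mem_insert_self l Y)
      simp [hins, hlX]

-- ### decomposition lemmas

lemma decomp_inter {J T R : Finset L} (hT : T ⊆ J) (hR : Disjoint R J) : (T ∪ R) ∩ J = T := by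
  ext x
  simp only [Finset.mem_inter, Finset.mem_union]
  constructor
  · rintro ⟨h1 | h1, h2⟩
    · exact h1
    · exact absurd h2 (Finset.disjoint_left.mp hR h1)
  · intro hx
    exact ⟨Or.inl hx, hT hx⟩

lemma decomp_sdiff {J T R : Finset L} (hT : T ⊆ J) (hR : Disjoint R J) : (T ∪ R) \ J = R := by
  ext x
  simp only [Finset.mem_sdiff, Finset.mem_union]
  constructor
  · rintro ⟨h1 | h1, h2⟩
    · exact absurd (hT h1) h2
    · exact h1
  · intro hx
    exact ⟨Or.inr hx, fun h => Finset.disjoint_left.mp hR hx h⟩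

lemma decomp_eq {J T T' R R' : Finset L} (hT : T ⊆ J) (hT' : T' ⊆ J) (hR : Disjoint R J)
    (hR' : Disjoint R' J) (h : T' ∪ R' = T ∪ R) : T' = T ∧ R' = R := by
  constructor
  · rw [← decomp_inter hT' hR', h, decomp_inter hT hR]
  · rw [← decomp_sdiff hT' hR', h, decomp_sdiff hT hR]

lemma self_decomp {J Y : Finset L} : (Y ∩ J) ∪ (Y \ J) = Y := by
  ext x
  simp only [Finset.mem_union, Finset.mem_inter, Finset.mem_sdiff]
  tauto

-- ### the sign mu

def sd (T T' : Finset L) : Finset L := (T \ T') ∪ (T' \ T)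

def mu (T T' R : Finset L) : ℂ := ∏ j ∈ sd T T', jwSign j R

lemma sd_self (T : Finset L) : sd T T = ∅ := by simp [sd]

lemma sd_comm (T T' : Finset L) : sd T T' = sd T' T := by
  rw [sd, sd, Finset.union_comm]

lemma sd_erase {j : L} {T : Finset L} (hj : j ∈ T) : sd T (T.erase j) = {j} := by
  ext x
  simp only [sd, Finset.mem_union, Finset.mem_sdiff, Finset.mem_erase, Finset.mem_singleton]
  constructor
  · rintro (⟨h1, h2⟩ | ⟨⟨h1, h2⟩, h3⟩)
    · by_contra hx
      exact h2 ⟨hx, h1⟩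
    · exact absurd h2 h3
  · rintro rfl
    exact Or.inl ⟨hj, fun hc => hc.1 rfl⟩

lemma sd_triple (A B C : Finset L) : sd (sd A B) (sd B C) = sd A C := by
  ext x
  simp only [sd, Finset.mem_union, Finset.mem_sdiff]
  by_cases hA : x ∈ A <;> by_cases hB : x ∈ B <;> by_cases hC : x ∈ C <;> simp [hA, hB, hC]

lemma mu_self (T R : Finset L) : mu T T R = 1 := by simp [mu, sd_self]

lemma mu_comm (T T' R : Finset L) : mu T T' R = mu T' T R := by rw [mu, mu, sd_comm]

lemma mu_empty (T T' : Finset L) : mu T T' ∅ = 1 := by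
  rw [mu]
  apply Finset.prod_eq_one
  intro j _
  simp [jwSign]

lemma mu_conj (T T' R : Finset L) : conj (mu T T' R) = mu T T' R := by
  rw [mu, map_prod]
  exact Finset.prod_congr rfl fun j _ => jwSign_conj j R

lemma prod_jw_sd (R A B : Finset L) :
    (∏ j ∈ A, jwSign j R) * (∏ j ∈ B, jwSign j R) = ∏ j ∈ sd A B, jwSign j R := by
  have hA : A = (A \ B) ∪ (A ∩ B) := by
    ext x; simp only [Finset.mem_union, Finset.mem_sdiff, Finset.mem_inter]; tauto
  have hB : B = (B \ A) ∪ (A ∩ B) := by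
    ext x; simp only [Finset.mem_union, Finset.mem_sdiff, Finset.mem_inter]; tauto
  have dA : Disjoint (A \ B) (A ∩ B) := by
    rw [Finset.disjoint_left]; intro x hx hx'
    exact (Finset.mem_sdiff.mp hx).2 (Finset.mem_inter.mp hx').2
  have dB : Disjoint (B \ A) (A ∩ B) := by
    rw [Finset.disjoint_left]; intro x hx hx'
    exact (Finset.mem_sdiff.mp hx).2 (Finset.mem_inter.mp hx').1
  have dAB : Disjoint (A \ B) (B \ A) := by
    rw [Finset.disjoint_left]; intro x hx hx'
    exact (Finset.mem_sdiff.mp hx').2 (Finset.mem_sdiff.mp hx).1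
  have pA : (∏ j ∈ A, jwSign j R) = (∏ j ∈ A \ B, jwSign j R) * ∏ j ∈ A ∩ B, jwSign j R := by
    rw [← Finset.prod_union dA, ← hA]
  have pB : (∏ j ∈ B, jwSign j R) = (∏ j ∈ B \ A, jwSign j R) * ∏ j ∈ A ∩ B, jwSign j R := by
    rw [← Finset.prod_union dB, ← hB]
  rw [pA, pB, sd, Finset.prod_union dAB]
  have h1 : (∏ j ∈ A ∩ B, jwSign j R) * ∏ j ∈ A ∩ B, jwSign j R = 1 := by
    rw [← Finset.prod_mul_distrib]
    exact Finset.prod_eq_one fun j _ => jwSign_mul_self j R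
  calc (∏ j ∈ A \ B, jwSign j R) * (∏ j ∈ A ∩ B, jwSign j R) *
        ((∏ j ∈ B \ A, jwSign j R) * ∏ j ∈ A ∩ B, jwSign j R)
      = (∏ j ∈ A \ B, jwSign j R) * (∏ j ∈ B \ A, jwSign j R) *
        ((∏ j ∈ A ∩ B, jwSign j R) * ∏ j ∈ A ∩ B, jwSign j R) := by ring
    _ = _ := by rw [h1, mul_one]

lemma mu_mul (T T'' T' R : Finset L) : mu T T'' R * mu T'' T' R = mu T T' R := by
  rw [mu, mu, mu, prod_jw_sd, sd_triple]

lemma mu_mul_self (T T' R : Finset L) : mu T T' R * mu T T' R = 1 := by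
  rw [mu, ← Finset.prod_mul_distrib]
  exact Finset.prod_eq_one fun j _ => jwSign_mul_self j R

lemma mu_ne_zero (T T' R : Finset L) : mu T T' R ≠ 0 := by
  intro h
  have := mu_mul_self T T' R
  rw [h, mul_zero] at this
  exact one_ne_zero this.symm

lemma mu_single {j : L} {T : Finset L} (hj : j ∈ T) (R : Finset L) :
    mu T (T.erase j) R = jwSign j R := by
  rw [mu, sd_erase hj, Finset.prod_singleton]

-- ### the good property

def good (J : Finset L) (b : FockSpace L →L[ℂ] FockSpace L) : Prop :=
  ∀ T T' R R' : Finset L, T ⊆ J → T' ⊆ J → Disjoint R J → Disjoint R' J →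
    ⟪eb (T' ∪ R'), b (eb (T ∪ R))⟫_ℂ =
      (if R' = R then mu T T' R else 0) * ⟪eb T', b (eb T)⟫_ℂ

lemma good_vec {J : Finset L} {y : FockSpace L →L[ℂ] FockSpace L} (hy : good J y)
    {T R : Finset L} (hT : T ⊆ J) (hR : Disjoint R J) :
    y (eb (T ∪ R)) = ∑ T'' ∈ J.powerset, (mu T T'' R * ⟪eb T'', y (eb T)⟫_ℂ) • eb (T'' ∪ R) := by
  ext Y
  rw [show (y (eb (T ∪ R))) Y = ⟪eb Y, y (eb (T ∪ R))⟫_ℂ from (inner_eb_left _ _).symm]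
  rw [show (∑ T'' ∈ J.powerset, (mu T T'' R * ⟪eb T'', y (eb T)⟫_ℂ) • eb (T'' ∪ R)) Y
      = ⟪eb Y, ∑ T'' ∈ J.powerset, (mu T T'' R * ⟪eb T'', y (eb T)⟫_ℂ) • eb (T'' ∪ R)⟫_ℂ from
    (inner_eb_left _ _).symm]
  rw [inner_sum]
  simp only [inner_smul_right, inner_eb_eb]
  have hYdec : (Y ∩ J) ∪ (Y \ J) = Y := self_decomp
  rw [show ⟪eb Y, y (eb (T ∪ R))⟫_ℂ = ⟪eb ((Y ∩ J) ∪ (Y \ J)), y (eb (T ∪ R))⟫_ℂ by rw [hYdec]]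
  rw [hy T (Y ∩ J) R (Y \ J) hT Finset.inter_subset_right hR (Finset.sdiff_disjoint)]
  by_cases hYR : Y \ J = R
  · rw [if_pos hYR]
    rw [Finset.sum_eq_single (Y ∩ J)]
    · have h0 : Y = (Y ∩ J) ∪ R := by rw [← hYR, hYdec]
      rw [if_pos h0, mul_one]
    · intro T'' hT'' hne
      have h0 : ¬ (Y = T'' ∪ R) := by
        intro hc
        apply hne
        rw [hc, decomp_inter (Finset.mem_powerset.mp hT'') hR]
      rw [if_neg h0, mul_zero]
    · intro hc
      exact absurd (Finset.mem_powerset.mpr Finset.inter_subset_right) hc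
  · rw [if_neg hYR, zero_mul]
    symm
    apply Finset.sum_eq_zero
    intro T'' hT''
    have h0 : ¬ (Y = T'' ∪ R) := by
      intro hc
      apply hYR
      rw [hc, decomp_sdiff (Finset.mem_powerset.mp hT'') hR]
    rw [if_neg h0, mul_zero]

lemma good_add {J : Finset L} {x y : FockSpace L →L[ℂ] FockSpace L} (hx : good J x)
    (hy : good J y) : good J (x + y) := by
  intro T T' R R' hT hT' hR hR'
  simp only [ContinuousLinearMap.add_apply, inner_add_right,
    hx T T' R R' hT hT' hR hR', hy T T' R R' hT hT' hR hR']
  ring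

lemma good_algebraMap {J : Finset L} (r : ℂ) :
    good J (algebraMap ℂ (FockSpace L →L[ℂ] FockSpace L) r) := by
  intro T T' R R' hT hT' hR hR'
  have hact : ∀ v : FockSpace L, (algebraMap ℂ (FockSpace L →L[ℂ] FockSpace L) r) v = r • v := by
    intro v
    rw [Algebra.algebraMap_eq_smul_one, ContinuousLinearMap.smul_apply,
      ContinuousLinearMap.one_apply]
  rw [hact, hact, inner_smul_right, inner_smul_right, inner_eb_eb, inner_eb_eb]
  by_cases h1 : T' = T
  · by_cases h2 : R' = R
    · subst h1; subst h2
      rw [if_pos rfl, if_pos rfl, if_pos rfl, mu_self]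
      ring
    · have : ¬ (T' ∪ R' = T ∪ R) := fun hc => h2 (decomp_eq hT hT' hR hR' hc).2
      rw [if_neg this, if_neg h2, if_pos h1]
      ring
  · have : ¬ (T' ∪ R' = T ∪ R) := fun hc => h1 (decomp_eq hT hT' hR hR' hc).1
    rw [if_neg this, if_neg h1]
    ring

lemma good_star {J : Finset L} {x : FockSpace L →L[ℂ] FockSpace L} (hx : good J x) :
    good J (star x) := by
  intro T T' R R' hT hT' hR hR'
  rw [ContinuousLinearMap.star_eq_adjoint]
  rw [ContinuousLinearMap.adjoint_inner_right, ← inner_conj_symm,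
    hx T' T R' R hT' hT hR' hR]
  rw [show ⟪eb T', (ContinuousLinearMap.adjoint x) (eb T)⟫_ℂ = conj ⟪eb T, x (eb T')⟫_ℂ by
    rw [ContinuousLinearMap.adjoint_inner_right, ← inner_conj_symm]]
  rw [map_mul]
  congr 1
  by_cases h : R' = R
  · subst h
    rw [if_pos rfl, if_pos rfl, mu_conj, mu_comm]
  · rw [if_neg h, if_neg (fun hc => h (hc.symm ▸ rfl) : ¬ R = R'), map_zero]

lemma good_mul {J : Finset L} {x y : FockSpace L →L[ℂ] FockSpace L} (hx : good J x)
    (hy : good J y) : good J (x * y) := by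
  intro T T' R R' hT hT' hR hR'
  have hyT := good_vec hy hT (Finset.disjoint_left.mpr (fun a ha => absurd ha
    (Finset.notMem_empty a)) : Disjoint (∅ : Finset L) J)
  rw [Finset.union_empty] at hyT
  have hrhs : ⟪eb T', x (y (eb T))⟫_ℂ
      = ∑ T'' ∈ J.powerset, ⟪eb T'', y (eb T)⟫_ℂ * ⟪eb T', x (eb T'')⟫_ℂ := by
    conv_lhs => rw [hyT]
    rw [map_sum, inner_sum]
    simp only [map_smul, inner_smul_right, mu_empty, one_mul, Finset.union_empty]
  rw [ContinuousLinearMap.mul_apply, good_vec hy hT hR, map_sum, inner_sum]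
  simp only [map_smul, inner_smul_right]
  rw [ContinuousLinearMap.mul_apply, hrhs, Finset.mul_sum]
  apply Finset.sum_congr rfl
  intro T'' hT''
  have hT''J : T'' ⊆ J := Finset.mem_powerset.mp hT''
  rw [hx T'' T' R R' hT''J hT' hR hR']
  by_cases h : R' = R
  · subst h
    rw [if_pos rfl, if_pos rfl]
    rw [show mu T T'' R' * ⟪eb T'', y (eb T)⟫_ℂ * (mu T'' T' R' * ⟪eb T', x (eb T'')⟫_ℂ)
        = (mu T T'' R' * mu T'' T' R') * (⟪eb T'', y (eb T)⟫_ℂ * ⟪eb T', x (eb T'')⟫_ℂ) by ring,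
      mu_mul]
  · rw [if_neg h, if_neg h]
    ring

lemma good_of_mem {J : Finset L} {b : FockSpace L →L[ℂ] FockSpace L}
    (hb : b ∈ StarAlgebra.adjoin ℂ (ann '' (J : Set L))) : good J b := by
  induction hb using StarAlgebra.adjoin_induction with
  | mem x hx =>
    obtain ⟨j, hj, rfl⟩ := hx
    have hjJ : j ∈ J := hj
    intro T T' R R' hT hT' hR hR'
    have hjR : j ∉ R := Finset.disjoint_right.mp hR hjJ
    by_cases hjT : j ∈ T
    · have hmem : j ∈ T ∪ R := Finset.mem_union_left R hjT
      rw [ann_eb, if_pos hmem, ann_eb, if_pos hjT]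
      have herase : (T ∪ R).erase j = T.erase j ∪ R := by
        rw [Finset.erase_union_distrib, Finset.erase_eq_of_notMem hjR]
      have hdisj : Disjoint (T.erase j) R :=
        (((hR.mono_right hT).symm).mono_left (Finset.erase_subset j T))
      rw [herase, jwSign_union j hdisj, inner_smul_right, inner_smul_right,
        inner_eb_eb, inner_eb_eb]
      by_cases h1 : R' = R
      · subst h1
        by_cases h2 : T' = T.erase j
        · subst h2
          rw [if_pos rfl, if_pos rfl, if_pos rfl, mu_single hjT]
          ring
        · have : ¬ (T' ∪ R' = T.erase j ∪ R') :=
            fun hc => h2 (decomp_eq (Finset.Subset.trans (Finset.erase_subset j T) hT)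
              hT' hR' hR' hc).1
          rw [if_neg this, if_neg h2, if_pos rfl]
          ring
      · have : ¬ (T' ∪ R' = T.erase j ∪ R) :=
          fun hc => h1 (decomp_eq (Finset.Subset.trans (Finset.erase_subset j T) hT)
            hT' hR hR' hc).2
        rw [if_neg this, if_neg h1]
        ring
    · have hmem : j ∉ T ∪ R := by
        rw [Finset.mem_union]
        rintro (hc | hc)
        · exact hjT hc
        · exact hjR hc
      rw [ann_eb, if_neg hmem, ann_eb, if_neg hjT]
      simp
  | algebraMap r => exact good_algebraMap r
  | add x y hx hy ihx ihy => exact good_add ihx ihy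
  | mul x y hx hy ihx ihy => exact good_mul ihx ihy
  | star x hx ihx => exact good_star ihx


-- ### product operators

def nix (l : L) : FockSpace L →L[ℂ] FockSpace L := ann l * cre l

def creProd (M : List L) : FockSpace L →L[ℂ] FockSpace L := (M.map cre).prod

def annProd (M : List L) : FockSpace L →L[ℂ] FockSpace L := (M.map ann).prod

def nixProd (M : List L) : FockSpace L →L[ℂ] FockSpace L := (M.map nix).prod

lemma nix_eb (l : L) (X : Finset L) : nix l (eb X) = if l ∈ X then 0 else eb X := by
  rw [nix, ContinuousLinearMap.mul_apply, cre_eb]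
  by_cases hl : l ∈ X
  · simp [hl]
  · rw [if_neg hl, if_neg hl, map_smul, ann_eb,
      if_pos (Finset.mem_insert_self l X), Finset.erase_insert hl, smul_smul,
      jwSign_mul_self, one_smul]

lemma nixProd_eb (M : List L) (X : Finset L) :
    nixProd M (eb X) = if Disjoint M.toFinset X then eb X else 0 := by
  induction M with
  | nil => simp [nixProd]
  | cons l M ih =>
    rw [nixProd, List.map_cons, List.prod_cons, ContinuousLinearMap.mul_apply, ← nixProd, ih]
    by_cases hM : Disjoint M.toFinset X
    · rw [if_pos hM, nix_eb]
      by_cases hl : l ∈ X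
      · rw [if_pos hl, if_neg]
        intro hc
        exact Finset.disjoint_left.mp hc (by simp) hl
      · rw [if_neg hl, if_pos]
        rw [List.toFinset_cons, Finset.disjoint_left]
        intro a ha
        rcases Finset.mem_insert.mp ha with rfl | ha'
        · exact hl
        · exact Finset.disjoint_left.mp hM ha'
    · rw [if_neg hM, map_zero, if_neg]
      intro hc
      exact hM (hc.mono_left (by rw [List.toFinset_cons]; exact Finset.subset_insert l M.toFinset))

lemma creProd_eb (M : List L) (hnd : M.Nodup) (X : Finset L) (hdisj : Disjoint M.toFinset X) :
    ∃ c : ℂ, c ≠ 0 ∧ conj c = c ∧ creProd M (eb X) = c • eb (X ∪ M.toFinset) := by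
  induction M with
  | nil => exact ⟨1, one_ne_zero, by simp, by simp [creProd]⟩
  | cons l M ih =>
    have hnd' : M.Nodup := (List.nodup_cons.mp hnd).2
    have hlM : l ∉ M.toFinset := by
      simp only [List.mem_toFinset]
      exact (List.nodup_cons.mp hnd).1
    have hdisj' : Disjoint M.toFinset X :=
      hdisj.mono_left (by rw [List.toFinset_cons]; exact Finset.subset_insert l M.toFinset)
    have hlX : l ∉ X := by
      intro hc
      exact Finset.disjoint_left.mp hdisj (by simp) hc
    obtain ⟨c, hc0, hcconj, hc⟩ := ih hnd' hdisj'
    refine ⟨c * jwSign l (X ∪ M.toFinset), mul_ne_zero hc0 (jwSign_ne_zero _ _), by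
      rw [map_mul, hcconj, jwSign_conj], ?_⟩
    rw [creProd, List.map_cons, List.prod_cons, ContinuousLinearMap.mul_apply, ← creProd, hc,
      map_smul, cre_eb, if_neg (by
        rw [Finset.mem_union]
        rintro (h | h)
        · exact hlX h
        · exact hlM h), smul_smul]
    congr 1
    rw [List.toFinset_cons, Finset.union_insert]

lemma annProd_eb (M : List L) (hnd : M.Nodup) (X : Finset L) :
    ∃ c : ℂ, conj c = c ∧ annProd M (eb X) = c • eb (X \ M.toFinset) ∧
      (M.toFinset ⊆ X → c ≠ 0) ∧ (¬ M.toFinset ⊆ X → c = 0) := by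
  induction M with
  | nil =>
    exact ⟨1, by simp, by simp [annProd], fun _ => one_ne_zero, fun hc => absurd (by simp) hc⟩
  | cons l M ih =>
    have hnd' : M.Nodup := (List.nodup_cons.mp hnd).2
    have hlM : l ∉ M.toFinset := by
      simp only [List.mem_toFinset]
      exact (List.nodup_cons.mp hnd).1
    obtain ⟨c, hcconj, hc, hcne, hczero⟩ := ih hnd'
    have hsub : (l :: M).toFinset ⊆ X ↔ l ∈ X ∧ M.toFinset ⊆ X := by
      rw [List.toFinset_cons, Finset.insert_subset_iff]
    have hsd : (X \ M.toFinset).erase l = X \ (l :: M).toFinset := by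
      ext x
      simp only [Finset.mem_erase, Finset.mem_sdiff, List.toFinset_cons, Finset.mem_insert]
      tauto
    rw [show annProd (l :: M) = ann l * annProd M by
      rw [annProd, List.map_cons, List.prod_cons, annProd]]
    rw [ContinuousLinearMap.mul_apply, hc, map_smul, ann_eb]
    by_cases hl : l ∈ X \ M.toFinset
    · rw [if_pos hl, smul_smul, hsd]
      refine ⟨c * jwSign l (X \ (l :: M).toFinset), by rw [map_mul, hcconj, jwSign_conj],
        rfl, ?_, ?_⟩
      · intro hs
        exact mul_ne_zero (hcne (hsub.mp hs).2) (jwSign_ne_zero _ _)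
      · intro hs
        have : ¬ M.toFinset ⊆ X := by
          intro hc2
          apply hs
          rw [hsub]
          exact ⟨(Finset.mem_sdiff.mp hl).1, hc2⟩
        rw [hczero this, zero_mul]
    · rw [if_neg hl, smul_zero]
      refine ⟨0, by simp, by rw [zero_smul], ?_, fun _ => rfl⟩
      intro hs
      exfalso
      apply hl
      rw [Finset.mem_sdiff]
      exact ⟨(hsub.mp hs).1, hlM⟩

lemma fvec_eb (M : List L) (hnd : M.Nodup) :
    ∃ c : ℂ, c ≠ 0 ∧ conj c = c ∧ fvec M = c • eb M.toFinset := by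
  induction M with
  | nil => exact ⟨1, one_ne_zero, by simp, by simp [fvec, vac, eb]⟩
  | cons l M ih =>
    have hnd' : M.Nodup := (List.nodup_cons.mp hnd).2
    have hlM : l ∉ M.toFinset := by
      simp only [List.mem_toFinset]
      exact (List.nodup_cons.mp hnd).1
    obtain ⟨c, hc0, hcconj, hc⟩ := ih hnd'
    refine ⟨c * jwSign l M.toFinset, mul_ne_zero hc0 (jwSign_ne_zero _ _), by
      rw [map_mul, hcconj, jwSign_conj], ?_⟩
    rw [show fvec (l :: M) = cre l (fvec M) from rfl, hc, map_smul, cre_eb, if_neg hlM,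
      smul_smul, List.toFinset_cons]

-- ### membership

lemma cre_mem_A {I : Finset L} {l : L} (hl : l ∈ I) : cre l ∈ A I := by
  have h1 : ann l ∈ A I := StarAlgebra.subset_adjoin ℂ _ ⟨l, hl, rfl⟩
  have h2 : cre l = star (ann l) := by
    rw [ContinuousLinearMap.star_eq_adjoint, ann, ContinuousLinearMap.adjoint_adjoint]
  rw [h2]
  exact star_mem h1

lemma ann_mem_A {I : Finset L} {l : L} (hl : l ∈ I) : ann l ∈ A I :=
  StarAlgebra.subset_adjoin ℂ _ ⟨l, hl, rfl⟩

lemma creProd_mem {I : Finset L} {M : List L} (hM : ∀ l ∈ M, l ∈ I) : creProd M ∈ A I := by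
  apply list_prod_mem
  intro x hx
  obtain ⟨l, hl, rfl⟩ := List.mem_map.mp hx
  exact cre_mem_A (hM l hl)

lemma annProd_mem {I : Finset L} {M : List L} (hM : ∀ l ∈ M, l ∈ I) : annProd M ∈ A I := by
  apply list_prod_mem
  intro x hx
  obtain ⟨l, hl, rfl⟩ := List.mem_map.mp hx
  exact ann_mem_A (hM l hl)

lemma nixProd_mem {I : Finset L} {M : List L} (hM : ∀ l ∈ M, l ∈ I) : nixProd M ∈ A I := by
  apply list_prod_mem
  intro x hx
  obtain ⟨l, hl, rfl⟩ := List.mem_map.mp hx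
  exact mul_mem (ann_mem_A (hM l hl)) (cre_mem_A (hM l hl))


/-- Proposition, part (i). Assume `p_M > 0` for all `M ∈ D_I`.
If `b ∈ A(ι(I))` satisfies `B_φ(a, b) = φ(ab) = 0` for all `a ∈ A(I)`, then `b = 0`. -/
theorem nondegenerate_left
    {L : Type} [Fintype L] [LinearOrder L]
    (I J : Finset L) (ι : L → L)
    (hinj : Set.InjOn ι (I : Set L)) (himg : I.image ι = J) (hIJ : Disjoint I J)
    (D : Finset L → List L) (hD : IsEnum D)
    (p : Finset L → ℝ)
    (hppos : ∀ S ∈ I.powerset, 0 < p S) (hp1 : ∑ S ∈ I.powerset, p S = 1)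
    (b : FockSpace L →L[ℂ] FockSpace L) (hb : b ∈ A (I.image ι))
    (h : ∀ a ∈ A I, phi D p I ι (a * b) = 0) :
    b = 0 := by
  subst himg
  set P : Finset L := I.image ι with hP
  -- basic facts
  have hgood : good P b := good_of_mem hb
  have himgsub : ∀ {S : Finset L}, S ⊆ I → S.image ι ⊆ P :=
    fun {S} hS => Finset.image_subset_image hS
  have hdisjP : ∀ {S : Finset L}, S ⊆ I → Disjoint S P := fun {S} hS => hIJ.mono_left hS
  have hdisjI : ∀ {S : Finset L}, S ⊆ I → Disjoint (S.image ι) I :=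
    fun {S} hS => (hIJ.mono_right (himgsub hS)).symm
  -- the list D S ++ (D S).map ι
  have hlist : ∀ S : Finset L, S ⊆ I →
      (D S ++ (D S).map ι).Nodup ∧ (D S ++ (D S).map ι).toFinset = S ∪ S.image ι := by
    intro S hS
    obtain ⟨hnd, htf⟩ := hD S
    have hmem : ∀ x ∈ D S, x ∈ S := fun x hx => htf ▸ List.mem_toFinset.mpr hx
    have hndm : ((D S).map ι).Nodup := by
      apply List.Nodup.map_on _ hnd
      intro x hx y hy hxy
      exact hinj (hS (hmem x hx)) (hS (hmem y hy)) hxy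
    have htfm : ((D S).map ι).toFinset = S.image ι := by
      ext x
      simp only [List.mem_toFinset, List.mem_map, Finset.mem_image]
      constructor
      · rintro ⟨y, hy, rfl⟩
        exact ⟨y, hmem y hy, rfl⟩
      · rintro ⟨y, hy, rfl⟩
        refine ⟨y, ?_, rfl⟩
        rw [← htf] at hy
        exact List.mem_toFinset.mp hy
    constructor
    · rw [List.nodup_append]
      refine ⟨hnd, hndm, fun x hx1 _ hx2 hxz => ?_⟩
      obtain ⟨y, hy, rfl⟩ := List.mem_map.mp hx2
      subst hxz
      have h1 : ι y ∈ I := hS (hmem _ hx1)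
      have h2 : ι y ∈ P := Finset.mem_image_of_mem ι (hS (hmem y hy))
      exact Finset.disjoint_left.mp hIJ h1 h2
    · rw [List.toFinset_append, htfm, htf]
  -- the coefficients of Phi
  have hfv : ∀ S : Finset L, ∃ c : ℂ, S ⊆ I →
      (c ≠ 0 ∧ conj c = c ∧ fvec (D S ++ (D S).map ι) = c • eb (S ∪ S.image ι)) := by
    intro S
    by_cases hS : S ⊆ I
    · obtain ⟨hnd, htf⟩ := hlist S hS
      obtain ⟨c, hc0, hcc, hce⟩ := fvec_eb _ hnd
      exact ⟨c, fun _ => ⟨hc0, hcc, by rw [hce, htf]⟩⟩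
    · exact ⟨1, fun hc => absurd hc hS⟩
  choose c hc using hfv
  set q : Finset L → ℂ := fun S => (Real.sqrt (p S) : ℂ) * c S with hq
  have hq0 : ∀ S, S ⊆ I → q S ≠ 0 := by
    intro S hS
    apply mul_ne_zero
    · simp only [ne_eq, Complex.ofReal_eq_zero]
      exact ne_of_gt (Real.sqrt_pos.mpr (hppos S (Finset.mem_powerset.mpr hS)))
    · exact (hc S hS).1
  have hqc : ∀ S, S ⊆ I → conj (q S) = q S := by
    intro S hS
    rw [hq]
    simp only [map_mul, Complex.conj_ofReal, (hc S hS).2.1]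
  have hPhi : Phi D p I ι = ∑ S ∈ I.powerset, q S • eb (S ∪ S.image ι) := by
    rw [Phi]
    apply Finset.sum_congr rfl
    intro S hS
    rw [(hc S (Finset.mem_powerset.mp hS)).2.2, smul_smul]
  -- inner products with Phi
  have hPhi_eb : ∀ Y : Finset L, (∀ R : Finset L, R ⊆ I → R ∪ R.image ι ≠ Y) →
      ⟪Phi D p I ι, eb Y⟫_ℂ = 0 := by
    intro Y hY
    rw [hPhi, sum_inner]
    apply Finset.sum_eq_zero
    intro R hR
    rw [inner_smul_left, inner_eb_eb, if_neg (hY R (Finset.mem_powerset.mp hR)), mul_zero]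
  have hPhi_eb' : ∀ S : Finset L, S ⊆ I →
      ⟪Phi D p I ι, eb (S ∪ S.image ι)⟫_ℂ = conj (q S) := by
    intro S hS
    rw [hPhi, sum_inner]
    rw [Finset.sum_eq_single S]
    · rw [inner_smul_left, inner_eb_eb, if_pos rfl, mul_one]
    · intro R hR hne
      rw [inner_smul_left, inner_eb_eb, if_neg, mul_zero]
      intro hcon
      apply hne
      have hRI : R ⊆ I := Finset.mem_powerset.mp hR
      have e1 : (R ∪ R.image ι) ∩ I = R := decomp_inter hRI (hdisjI hRI)
      have e2 : (S ∪ S.image ι) ∩ I = S := decomp_inter hS (hdisjI hS)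
      rw [← e1, hcon, e2]
    · intro hc'
      exact absurd (Finset.mem_powerset.mpr hS) hc'
  -- ### Step B : components of b Phi vanish
  have key1 : ∀ S S' : Finset L, S ⊆ I → S' ⊆ I →
      ⟪eb (S' ∪ S.image ι), b (Phi D p I ι)⟫_ℂ = 0 := by
    intro S S' hS hS'
    set X₀ : Finset L := S' ∪ S.image ι with hX₀
    set a : FockSpace L →L[ℂ] FockSpace L :=
      creProd (D S) * (nixProd (D I) * annProd (D S')) with ha
    have haA : a ∈ A I := by
      apply mul_mem
      · exact creProd_mem (fun l hl => hS ((hD S).2 ▸ List.mem_toFinset.mpr hl))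
      apply mul_mem
      · exact nixProd_mem (fun l hl => (hD I).2 ▸ List.mem_toFinset.mpr hl)
      · exact annProd_mem (fun l hl => hS' ((hD S').2 ▸ List.mem_toFinset.mpr hl))
    -- action of a on basis vectors
    have haact : ∀ X : Finset L,
        (S' ⊆ X ∧ Disjoint I (X \ S') →
          ∃ κ : ℂ, κ ≠ 0 ∧ a (eb X) = κ • eb ((X \ S') ∪ S)) ∧
        (¬ (S' ⊆ X ∧ Disjoint I (X \ S')) → a (eb X) = 0) := by
      intro X
      obtain ⟨c₁, hc₁c, hc₁e, hc₁ne, hc₁z⟩ := annProd_eb (D S') (hD S').1 X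
      rw [(hD S').2] at hc₁e hc₁ne hc₁z
      constructor
      · rintro ⟨hsub, hdisj⟩
        have hnixdisj : Disjoint (D I).toFinset (X \ S') := by rw [(hD I).2]; exact hdisj
        have hcredisj : Disjoint (D S).toFinset (X \ S') := by
          rw [(hD S).2]; exact hdisj.mono_left hS
        obtain ⟨c₂, hc₂0, hc₂c, hc₂e⟩ := creProd_eb (D S) (hD S).1 (X \ S') hcredisj
        refine ⟨c₁ * c₂, mul_ne_zero (hc₁ne hsub) hc₂0, ?_⟩
        rw [ha, ContinuousLinearMap.mul_apply, ContinuousLinearMap.mul_apply, hc₁e, map_smul,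
          nixProd_eb, if_pos hnixdisj, map_smul, hc₂e, smul_smul, (hD S).2]
      · intro hcon
        by_cases hsub : S' ⊆ X
        · have hdisj : ¬ Disjoint I (X \ S') := fun hd => hcon ⟨hsub, hd⟩
          have hnixdisj : ¬ Disjoint (D I).toFinset (X \ S') := by rw [(hD I).2]; exact hdisj
          rw [ha, ContinuousLinearMap.mul_apply, ContinuousLinearMap.mul_apply, hc₁e, map_smul,
            nixProd_eb, if_neg hnixdisj, smul_zero, map_zero]
        · rw [ha, ContinuousLinearMap.mul_apply, ContinuousLinearMap.mul_apply, hc₁e,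
            hc₁z hsub, zero_smul, map_zero, map_zero]
    -- inner products ⟪Phi, a (eb X)⟫
    have hinner0 : ∀ X : Finset L, X ≠ X₀ → ⟪Phi D p I ι, a (eb X)⟫_ℂ = 0 := by
      intro X hne
      by_cases hcond : S' ⊆ X ∧ Disjoint I (X \ S')
      · obtain ⟨κ, hκ0, hκe⟩ := (haact X).1 hcond
        rw [hκe, inner_smul_right, hPhi_eb, mul_zero]
        intro R hRI hcon
        -- R ∪ ι R = (X \ S') ∪ S forces R = S and X = X₀
        have e1 : (R ∪ R.image ι) ∩ I = R := decomp_inter hRI (hdisjI hRI)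
        have e2 : ((X \ S') ∪ S) ∩ I = S := by
          rw [Finset.union_comm]
          exact decomp_inter hS hcond.2.symm
        have hRS : R = S := by rw [← e1, hcon, e2]
        have e3 : (R ∪ R.image ι) \ I = R.image ι := decomp_sdiff hRI (hdisjI hRI)
        have e4 : ((X \ S') ∪ S) \ I = X \ S' := by
          rw [Finset.union_comm]
          exact decomp_sdiff hS hcond.2.symm
        have hXS : X \ S' = S.image ι := by rw [← e4, ← hcon, e3, hRS]
        apply hne
        rw [hX₀, ← hXS, Finset.union_comm, Finset.sdiff_union_of_subset hcond.1]
      · rw [(haact X).2 hcond, inner_zero_right]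
    have hinner1 : ⟪Phi D p I ι, a (eb X₀)⟫_ℂ ≠ 0 := by
      have hsub : S' ⊆ X₀ := Finset.subset_union_left
      have hsd : X₀ \ S' = S.image ι := by
        rw [hX₀, Finset.union_sdiff_left]
        apply Finset.sdiff_eq_self_of_disjoint
        exact ((hdisjP hS').mono_right (himgsub hS)).symm
      have hdisj : Disjoint I (X₀ \ S') := by rw [hsd]; exact (hdisjI hS).symm
      obtain ⟨κ, hκ0, hκe⟩ := (haact X₀).1 ⟨hsub, hdisj⟩
      rw [hκe, inner_smul_right, hsd, Finset.union_comm, hPhi_eb' S hS]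
      apply mul_ne_zero hκ0
      rw [hqc S hS]
      exact hq0 S hS
    -- use the hypothesis h
    have h0 : ⟪Phi D p I ι, a (b (Phi D p I ι))⟫_ℂ = 0 := by
      have := h a haA
      rw [phi, ContinuousLinearMap.mul_apply] at this
      exact this
    rw [euclid_sum (b (Phi D p I ι)), map_sum, inner_sum] at h0
    simp only [map_smul, inner_smul_right] at h0
    rw [Finset.sum_eq_single X₀] at h0
    · rcases mul_eq_zero.mp h0 with h1 | h2
      · rw [inner_eb_left]
        exact h1
      · exact absurd h2 hinner1
    · intro X _ hne
      rw [hinner0 X hne, mul_zero]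
    · intro hc'
      exact absurd (Finset.mem_univ X₀) hc'
  -- ### Step C : matrix elements between J-mode basis vectors vanish
  have key2 : ∀ S S' : Finset L, S ⊆ I → S' ⊆ I →
      ⟪eb (S.image ι), b (eb (S'.image ι))⟫_ℂ = 0 := by
    intro S S' hS hS'
    have h0 := key1 S S' hS hS'
    rw [hPhi, map_sum, inner_sum] at h0
    simp only [map_smul, inner_smul_right] at h0
    have h1 : ∑ R ∈ I.powerset, q R * ⟪eb (S' ∪ S.image ι), b (eb (R ∪ R.image ι))⟫_ℂ
        = q S' * (mu (S'.image ι) (S.image ι) S' * ⟪eb (S.image ι), b (eb (S'.image ι))⟫_ℂ) := by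
      rw [Finset.sum_eq_single S']
      · rw [Finset.union_comm S' (S.image ι), Finset.union_comm S' (S'.image ι),
          hgood (S'.image ι) (S.image ι) S' S' (himgsub hS') (himgsub hS)
            (hdisjP hS') (hdisjP hS'), if_pos rfl]
      · intro R hR hne
        have hRI : R ⊆ I := Finset.mem_powerset.mp hR
        rw [Finset.union_comm S' (S.image ι), Finset.union_comm R (R.image ι),
          hgood (R.image ι) (S.image ι) R S' (himgsub hRI) (himgsub hS)
            (hdisjP hRI) (hdisjP hS'), if_neg (fun hc => hne hc.symm)]
        ring
      · intro hc'
        exact absurd (Finset.mem_powerset.mpr hS') hc'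
    rw [h1] at h0
    rcases mul_eq_zero.mp h0 with h2 | h2
    · exact absurd h2 (hq0 S' hS')
    rcases mul_eq_zero.mp h2 with h3 | h3
    · exact absurd h3 (mu_ne_zero _ _ _)
    · exact h3
  -- ### Step D : conclude
  have key3 : ∀ X : Finset L, b (eb X) = 0 := by
    intro X
    have hvec := good_vec hgood (Finset.inter_subset_right : X ∩ P ⊆ P)
      (Finset.sdiff_disjoint : Disjoint (X \ P) P)
    rw [self_decomp] at hvec
    rw [hvec]
    apply Finset.sum_eq_zero
    intro T'' hT''
    obtain ⟨S, hSI, hSimg⟩ := Finset.subset_image_iff.mp (Finset.mem_powerset.mp hT'')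
    obtain ⟨S', hS'I, hS'img⟩ :=
      Finset.subset_image_iff.mp (Finset.inter_subset_right : X ∩ P ⊆ P)
    rw [← hSimg, ← hS'img, key2 S S' hSI hS'I, mul_zero, zero_smul]
  apply ContinuousLinearMap.ext
  intro v
  rw [ContinuousLinearMap.zero_apply, euclid_sum v, map_sum]
  apply Finset.sum_eq_zero
  intro X _
  rw [map_smul, key3, smul_zero]


end Fermion
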